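/- Let H be a numerical semigroup of genus g with ρ even gaps, and suppose g ≥ 1. Then the smallest odd non-gap u_ρ of H satisfies u_ρ ≥ max{2g − 4ρ + 1, 3}. -/
import Mathlib


/-- A numerical semigroup: a cofinite subsemigroup of ℕ containing 0. -/
def IsNumSgp (S : Set ℕ) : Prop :=
  0 ∈ S ∧ (∀ a ∈ S, ∀ b ∈ S, a + b ∈ S) ∧ (Sᶜ).Finite

/-- The genus: number of gaps. -/
noncomputable def genus (S : Set ℕ) : ℕ := Sᶜ.ncard

/-- The j-th smallest positive element (non-gap) of `S`, 1-indexed. -/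
noncomputable def nongap (S : Set ℕ) (j : ℕ) : ℕ :=
  Nat.nth (fun n => n ∈ S ∧ 0 < n) (j - 1)

/-- The i-th smallest gap of `S`, 1-indexed. -/
noncomputable def gapNth (S : Set ℕ) (i : ℕ) : ℕ :=
  Nat.nth (fun n => n ∉ S) (i - 1)

/-- The weight of the semigroup. -/
noncomputable def weight (S : Set ℕ) : ℕ :=
  ∑ i ∈ Finset.Icc 1 (genus S), (gapNth S i - i)

/-- The number of even gaps of `S`. -/
noncomputable def evenGaps (S : Set ℕ) : ℕ := {n | n ∉ S ∧ Even n}.ncard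

/-- `S` is γ-hyperelliptic: exactly γ even elements in [2,4γ], and the
(γ+1)-th positive element is 4γ+2. -/
noncomputable def GammaHyper (S : Set ℕ) (γ : ℕ) : Prop :=
  {n ∈ S | Even n ∧ 2 ≤ n ∧ n ≤ 4 * γ}.ncard = γ ∧ nongap S (γ + 1) = 4 * γ + 2

theorem stmt_4 (S : Set ℕ) (hS : IsNumSgp S) (hg : 1 ≤ genus S) :
    max (2 * genus S - 4 * evenGaps S + 1) 3 ≤ sInf {n ∈ S | Odd n} := by
  obtain ⟨h0, hadd, hfin⟩ := hS
  obtain ⟨N, hN⟩ : ∃ N : ℕ, ∀ n, N ≤ n → n ∈ S := by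
    obtain ⟨N, hN⟩ := hfin.bddAbove
    refine ⟨N + 1, fun n hn => ?_⟩
    by_contra h
    exact absurd (hN h) (by omega)
  have hne : {n ∈ S | Odd n}.Nonempty :=
    ⟨2 * N + 1, hN _ (by omega), ⟨N, by ring⟩⟩
  set u := sInf {n ∈ S | Odd n} with hudef
  obtain ⟨huS, huodd⟩ : u ∈ S ∧ Odd u := Nat.sInf_mem hne
  have h1 : 1 ∉ S := by
    intro h1
    have hall : ∀ n, n ∈ S := by
      intro n
      induction n with
      | zero => exact h0
      | succ k ih => exact hadd k ih 1 h1
    have hg0 : genus S = 0 := by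
      unfold genus
      have : Sᶜ = ∅ := by
        ext n; simp [hall n]
      simp [this]
    omega
  have hu3 : 3 ≤ u := by
    obtain ⟨k, hk⟩ := huodd
    have : u ≠ 1 := fun h => h1 (h ▸ huS)
    omega
  set m := (u - 1) / 2 with hmdef
  have humod : u = 2 * m + 1 := by
    obtain ⟨k, hk⟩ := huodd; omega
  set E := {n | n ∉ S ∧ Even n} with hEdef
  set A := {n | n ∉ S ∧ Odd n} with hAdef
  have hEfin : E.Finite := hfin.subset fun n hn => hn.1
  have hAfin : A.Finite := hfin.subset fun n hn => hn.1
  have hgsplit : genus S = A.ncard + E.ncard := by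
    unfold genus
    rw [← Set.ncard_union_eq ?_ hAfin hEfin]
    · congr 1
      ext n
      simp only [Set.mem_compl_iff, Set.mem_union, hAdef, hEdef, Set.mem_setOf_eq]
      rcases Nat.even_or_odd n with h | h <;> tauto
    · rw [Set.disjoint_left]
      rintro n ⟨-, hno⟩ ⟨-, hne'⟩
      exact (Nat.not_even_iff_odd.mpr hno) hne'
  set L := {n : ℕ | Odd n ∧ n < u} with hLdef
  set B := {n ∈ A | u < n} with hBdef
  have hLsub : L ⊆ A := by
    rintro n ⟨hno, hnu⟩
    refine ⟨fun hnS => ?_, hno⟩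
    have := Nat.sInf_le (show n ∈ {n ∈ S | Odd n} from ⟨hnS, hno⟩)
    omega
  have hAeq : A = L ∪ B := by
    ext n
    constructor
    · rintro ⟨hnS, hno⟩
      have hnu : n ≠ u := fun h => hnS (h ▸ huS)
      rcases Nat.lt_or_ge n u with h | h
      · exact Or.inl ⟨hno, h⟩
      · exact Or.inr ⟨⟨hnS, hno⟩, by omega⟩
    · rintro (h | h)
      · exact hLsub h
      · exact h.1
  have hLB : Disjoint L B := by
    rw [Set.disjoint_left]
    rintro n ⟨-, h1⟩ ⟨-, h2⟩
    omega
  have hLcard : L.ncard = m := by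
    have : L = (fun k => 2 * k + 1) '' ↑(Finset.range m) := by
      ext n
      simp only [hLdef, Set.mem_setOf_eq, Set.mem_image, Finset.coe_range, Set.mem_Iio]
      constructor
      · rintro ⟨⟨k, hk⟩, hlt⟩
        exact ⟨k, by omega, by omega⟩
      · rintro ⟨k, hk, rfl⟩
        exact ⟨⟨k, by ring⟩, by omega⟩
    rw [this, Set.ncard_image_of_injective _ (fun a b h => by omega),
      Set.ncard_coe_finset, Finset.card_range]
  have hBcard : B.ncard ≤ E.ncard := by
    have himg : (fun n => n - u) '' B ⊆ E := by
      rintro _ ⟨n, ⟨⟨hnS, hnodd⟩, hlt⟩, rfl⟩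
      refine ⟨fun h => hnS ?_, ?_⟩
      · have h2 := hadd u huS (n - u) h
        have h3 : u + (n - u) = n := by omega
        rwa [h3] at h2
      · obtain ⟨a, ha⟩ := hnodd
        obtain ⟨b, hb⟩ := huodd
        exact ⟨a - b, by show n - u = (a - b) + (a - b); omega⟩
    calc B.ncard = ((fun n => n - u) '' B).ncard := by
          refine (Set.ncard_image_of_injOn ?_).symm
          rintro a ⟨-, ha⟩ b ⟨-, hb⟩ h
          simp only at h
          omega
      _ ≤ E.ncard := Set.ncard_le_ncard himg hEfin
  have hAcard : A.ncard = L.ncard + B.ncard := by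
    rw [hAeq, Set.ncard_union_eq hLB (hAfin.subset (hAeq ▸ Set.subset_union_left))
      (hAfin.subset (hAeq ▸ Set.subset_union_right))]
  have hE : evenGaps S = E.ncard := rfl
  rw [max_le_iff]
  omega
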